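/- Let F = {0 (constant), 1 (constant), f (arity 3), g (arity 2)} and let R be the rewrite system {f(0,1,x) → f(x,x,x), g(x,y) → x, g(x,y) → y}. Then every ground term of T(F) innermost terminates, i.e., there is no infinite sequence of innermost rewrite steps starting from any ground term. -/

import Mathlib

namespace TRS

inductive Term (F V : Type*) where
  | var : V → Term F V
  | app : F → List (Term F V) → Term F V

namespace Term

variable {F V : Type*}

mutual
  def subst (σ : V → Term F V) : Term F V → Term F V
    | .var x => σ x
    | .app f ts => .app f (substList σ ts)

  def substList (σ : V → Term F V) : List (Term F V) → List (Term F V)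
    | [] => []
    | t :: ts => subst σ t :: substList σ ts
end

mutual
  def vars : Term F V → Set V
    | .var x => {x}
    | .app _ ts => varsList ts

  def varsList : List (Term F V) → Set V
    | [] => ∅
    | t :: ts => vars t ∪ varsList ts
end

def IsGround (t : Term F V) : Prop := vars t = ∅

def top : Term F V → Option F
  | .var _ => none
  | .app f _ => some f

def subtermAt : List ℕ → Term F V → Option (Term F V)
  | [], t => some t
  | _ :: _, .var _ => none
  | i :: p, .app _ ts =>
    match ts[i]? with
    | none => none
    | some u => subtermAt p u

def replaceAt : List ℕ → Term F V → Term F V → Option (Term F V)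
  | [], _, u => some u
  | _ :: _, .var _, _ => none
  | i :: p, .app f ts, u =>
    match ts[i]? with
    | none => none
    | some ti =>
      match replaceAt p ti u with
      | none => none
      | some ti' => some (.app f (ts.set i ti'))

inductive WF (arity : F → ℕ) : Term F V → Prop
  | var (x : V) : WF arity (.var x)
  | app (f : F) (ts : List (Term F V)) :
      ts.length = arity f → (∀ t ∈ ts, WF arity t) → WF arity (.app f ts)

inductive Occurs (f : F) : Term F V → Prop
  | head (ts : List (Term F V)) : Occurs f (.app f ts)
  | arg {g : F} {ts : List (Term F V)} {t : Term F V} :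
      t ∈ ts → Occurs f t → Occurs f (.app g ts)

end Term

open Term

structure Rule (F V : Type*) where
  lhs : Term F V
  rhs : Term F V

variable {F V : Type*}

/-- The domain of a substitution. -/
def SDom (σ : V → Term F V) : Set V := {x | σ x ≠ Term.var x}

/-- The range (variables) of a substitution. -/
def SRan (σ : V → Term F V) : Set V := ⋃ x ∈ SDom σ, vars (σ x)

/-- A ground substitution maps every variable of its domain to a ground term. -/
def GroundSubst (σ : V → Term F V) : Prop := ∀ x ∈ SDom σ, IsGround (σ x)

/-- `R` is a rewrite system: no left-hand side is a variable, and
`Var(rhs) ⊆ Var(lhs)` for every rule. -/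
def IsRS (R : List (Rule F V)) : Prop :=
  ∀ ρ ∈ R, (∀ x : V, ρ.lhs ≠ Term.var x) ∧ vars ρ.rhs ⊆ vars ρ.lhs

/-- Rewriting at position `p` with the rule `l → r`. -/
def RewriteAtWith (l r : Term F V) (p : List ℕ) (s t : Term F V) : Prop :=
  ∃ τ : V → Term F V, subtermAt p s = some (subst τ l) ∧ replaceAt p s (subst τ r) = some t

/-- Rewriting at position `p` with some rule of `R`. -/
def RewriteAt (R : List (Rule F V)) (p : List ℕ) (s t : Term F V) : Prop :=
  ∃ ρ ∈ R, RewriteAtWith ρ.lhs ρ.rhs p s t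

/-- The rewriting relation induced by `R`. -/
def Rewrite (R : List (Rule F V)) (s t : Term F V) : Prop :=
  ∃ p, RewriteAt R p s t

def ReducibleAt (R : List (Rule F V)) (s : Term F V) (p : List ℕ) : Prop :=
  ∃ t, RewriteAt R p s t

def Reducible (R : List (Rule F V)) (s : Term F V) : Prop :=
  ∃ t, Rewrite R s t

def NormalForm (R : List (Rule F V)) (s : Term F V) : Prop := ¬ Reducible R s

/-- `n` is a normal form of `s`. -/
def IsNormalFormOf (R : List (Rule F V)) (s n : Term F V) : Prop :=
  Relation.ReflTransGen (Rewrite R) s n ∧ NormalForm R n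

/-- `q` is strictly below `p` (`p` is a strict prefix of `q`). -/
def StrictBelow (p q : List ℕ) : Prop := p <+: q ∧ p ≠ q

/-- Innermost rewrite step at position `p`. -/
def InnAt (R : List (Rule F V)) (p : List ℕ) (s t : Term F V) : Prop :=
  RewriteAt R p s t ∧ ∀ q, StrictBelow p q → ¬ ReducibleAt R s q

def InnStep (R : List (Rule F V)) (s t : Term F V) : Prop := ∃ p, InnAt R p s t

/-- Outermost rewrite step at position `p`. -/
def OutAt (R : List (Rule F V)) (p : List ℕ) (s t : Term F V) : Prop :=
  RewriteAt R p s t ∧ ∀ q, StrictBelow q p → ¬ ReducibleAt R s q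

def OutStep (R : List (Rule F V)) (s t : Term F V) : Prop := ∃ p, OutAt R p s t

/-- Innermost rewrite step at position `p` with rule `l → r`. -/
def InnAtWith (R : List (Rule F V)) (l r : Term F V) (p : List ℕ) (s t : Term F V) : Prop :=
  RewriteAtWith l r p s t ∧ ∀ q, StrictBelow p q → ¬ ReducibleAt R s q

/-- Outermost rewrite step at position `p` with rule `l → r`. -/
def OutAtWith (R : List (Rule F V)) (l r : Term F V) (p : List ℕ) (s t : Term F V) : Prop :=
  RewriteAtWith l r p s t ∧ ∀ q, StrictBelow q p → ¬ ReducibleAt R s q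

/-- No infinite innermost derivation starts from `t`. -/
def InnTerminates (R : List (Rule F V)) (t : Term F V) : Prop :=
  ¬ ∃ f : ℕ → Term F V, f 0 = t ∧ ∀ n, InnStep R (f n) (f (n + 1))

/-- No infinite outermost derivation starts from `t`. -/
def OutTerminates (R : List (Rule F V)) (t : Term F V) : Prop :=
  ¬ ∃ f : ℕ → Term F V, f 0 = t ∧ ∀ n, OutStep R (f n) (f (n + 1))

def Unifies (σ : V → Term F V) (u v : Term F V) : Prop := subst σ u = subst σ v

/-- `σ` is a most general unifier of `u` and `v`. -/
def IsMGU (u v : Term F V) (σ : V → Term F V) : Prop :=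
  Unifies σ u v ∧
    ∀ τ : V → Term F V, Unifies τ u v → ∃ ρ : V → Term F V, ∀ x, subst ρ (σ x) = τ x

/-- The usable rules of a term (least set closed under the defining equations). -/
inductive Usable (R : List (Rule F V)) (XA : Set V) : Term F V → Rule F V → Prop
  | var {x : V} {ρ : Rule F V} : x ∉ XA → ρ ∈ R → Usable R XA (Term.var x) ρ
  | rls {f : F} {ts : List (Term F V)} {ρ : Rule F V} :
      ρ ∈ R → Term.top ρ.lhs = some f → Usable R XA (Term.app f ts) ρ
  | arg {f : F} {ts : List (Term F V)} {t : Term F V} {ρ : Rule F V} :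
      t ∈ ts → Usable R XA t ρ → Usable R XA (Term.app f ts) ρ
  | rhs {f : F} {ts : List (Term F V)} {ρ' ρ : Rule F V} :
      ρ' ∈ R → Term.top ρ'.lhs = some f → Usable R XA ρ'.rhs ρ → Usable R XA (Term.app f ts) ρ

/-- The signature F = {0, 1, f:3, g:2}. -/
inductive F15 : Type
  | zero | one | f | g

def arity15 : F15 → ℕ
  | .zero => 0
  | .one => 0
  | .f => 3
  | .g => 2

/-- Toyama's system: f(0,1,x) → f(x,x,x), g(x,y) → x, g(x,y) → y. -/
def R15 : List (Rule F15 ℕ) :=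
  [ ⟨.app .f [.app .zero [], .app .one [], .var 0], .app .f [.var 0, .var 0, .var 0]⟩,
    ⟨.app .g [.var 0, .var 1], .var 0⟩,
    ⟨.app .g [.var 0, .var 1], .var 1⟩ ]

-- ===== auxiliary development for statement 15 =====

instance : DecidableEq F15 := fun a b => by
  cases a <;> cases b <;> first
    | exact isTrue rfl
    | exact isFalse (fun h => F15.noConfusion h)

/-- indicator for a `g`-redex-shape node (depends only on head and arity). -/
def gInd : F15 → ℕ → ℕ
  | .g, 2 => 1
  | _, _ => 0

/-- the "key" of a term: its head symbol and number of arguments. -/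
def key : Term F15 ℕ → Option (F15 × ℕ)
  | .var _ => none
  | .app h ts => some (h, ts.length)

/-- indicator for an `f(0,1,·)` pattern node, in terms of the keys of children. -/
def pInd : F15 → List (Option (F15 × ℕ)) → ℕ
  | .f, [a, b, _] => if a = some (.zero, 0) ∧ b = some (.one, 0) then 1 else 0
  | _, _ => 0

mutual
  /-- number of `g`-redex-shaped subterms. -/
  def wG : Term F15 ℕ → ℕ
    | .var _ => 0
    | .app h ts => gInd h ts.length + wGL ts
  def wGL : List (Term F15 ℕ) → ℕ
    | [] => 0
    | t :: ts => wG t + wGL ts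
end

mutual
  /-- number of `f(0,1,·)`-pattern subterms. -/
  def wP : Term F15 ℕ → ℕ
    | .var _ => 0
    | .app h ts => pInd h (ts.map key) + wPL ts
  def wPL : List (Term F15 ℕ) → ℕ
    | [] => 0
    | t :: ts => wP t + wPL ts
end

theorem key_app (h : F15) (ts : List (Term F15 ℕ)) :
    key (.app h ts) = some (h, ts.length) := rfl

theorem pInd_zero (ks : List (Option (F15 × ℕ))) : pInd .zero ks = 0 := rfl

theorem pInd_one (ks : List (Option (F15 × ℕ))) : pInd .one ks = 0 := rfl

theorem pInd_pat (k : Option (F15 × ℕ)) :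
    pInd .f [some (.zero, 0), some (.one, 0), k] = 1 := by
  show (if some ((.zero : F15), (0:ℕ)) = some ((.zero : F15), (0:ℕ)) ∧
      some ((.one : F15), (0:ℕ)) = some ((.one : F15), (0:ℕ)) then 1 else 0) = 1
  rw [if_pos ⟨rfl, rfl⟩]

theorem pInd_same (k k' : Option (F15 × ℕ)) : pInd .f [k, k, k'] = 0 := by
  show (if k = some (.zero, 0) ∧ k = some (.one, 0) then 1 else 0) = 0
  rw [if_neg]; rintro ⟨rfl, h⟩; simp at h

theorem gInd_ne {h : F15} {n : ℕ} (hne : gInd h n ≠ 0) : h = .g ∧ n = 2 := by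
  revert hne; unfold gInd; split
  · exact fun _ => ⟨rfl, rfl⟩
  · intro h; exact absurd rfl h

theorem pInd_ne {h : F15} {ks : List (Option (F15 × ℕ))} (hne : pInd h ks ≠ 0) :
    h = .f ∧ ∃ k, ks = [some (.zero, 0), some (.one, 0), k] := by
  revert hne; unfold pInd; split
  · rename_i a b c
    intro hne
    by_cases hc : a = some (.zero, 0) ∧ b = some (.one, 0)
    · exact ⟨rfl, c, by rw [hc.1, hc.2]⟩
    · rw [if_neg hc] at hne; exact absurd rfl hne
  · intro h; exact absurd rfl h

theorem key_zero {a : Term F15 ℕ} (h : key a = some (.zero, 0)) : a = .app .zero [] := by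
  cases a with
  | var x => simp [key] at h
  | app f ts =>
    simp only [key, Option.some.injEq, Prod.mk.injEq] at h
    obtain ⟨rfl, hl⟩ := h
    rw [List.length_eq_zero_iff] at hl; rw [hl]

theorem key_one {a : Term F15 ℕ} (h : key a = some (.one, 0)) : a = .app .one [] := by
  cases a with
  | var x => simp [key] at h
  | app f ts =>
    simp only [key, Option.some.injEq, Prod.mk.injEq] at h
    obtain ⟨rfl, hl⟩ := h
    rw [List.length_eq_zero_iff] at hl; rw [hl]

theorem wGL_set : ∀ (ts : List (Term F15 ℕ)) (i : ℕ) (ti ti' : Term F15 ℕ),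
    ts[i]? = some ti → wGL (ts.set i ti') + wG ti = wGL ts + wG ti' := by
  intro ts
  induction ts with
  | nil => intro i ti ti' h; simp at h
  | cons a ts ih =>
    intro i ti ti' h
    cases i with
    | zero => simp at h; subst h; simp [List.set, wGL]; omega
    | succ n =>
      simp at h
      have := ih n ti ti' h
      simp [List.set, wGL]; omega

theorem wPL_set : ∀ (ts : List (Term F15 ℕ)) (i : ℕ) (ti ti' : Term F15 ℕ),
    ts[i]? = some ti → wPL (ts.set i ti') + wP ti = wPL ts + wP ti' := by
  intro ts
  induction ts with
  | nil => intro i ti ti' h; simp at h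
  | cons a ts ih =>
    intro i ti ti' h
    cases i with
    | zero => simp at h; subst h; simp [List.set, wPL]; omega
    | succ n =>
      simp at h
      have := ih n ti ti' h
      simp [List.set, wPL]; omega

theorem map_key_set : ∀ (ts : List (Term F15 ℕ)) (i : ℕ) (ti ti' : Term F15 ℕ),
    ts[i]? = some ti → key ti' = key ti → (ts.set i ti').map key = ts.map key := by
  intro ts
  induction ts with
  | nil => intro i ti ti' h; simp at h
  | cons a ts ih =>
    intro i ti ti' h hk
    cases i with
    | zero => simp at h; subst h; simp [List.set, hk]
    | succ n =>
      simp at h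
      simp [List.set, ih n ti ti' h hk]

/-- Key replacement lemma: effect of replacing the subterm at `p`. -/
theorem repl : ∀ (p : List ℕ) (s u u' t : Term F15 ℕ),
    subtermAt p s = some u → replaceAt p s u' = some t →
    wG t + wG u = wG s + wG u' ∧
      (key u = key u' → key t = key s ∧ wP t + wP u = wP s + wP u') := by
  intro p
  induction p with
  | nil =>
    intro s u u' t h1 h2
    simp only [subtermAt, Option.some.injEq] at h1
    simp only [replaceAt, Option.some.injEq] at h2
    subst h1; subst h2
    exact ⟨by omega, fun hk => ⟨hk.symm, by omega⟩⟩
  | cons i p ih =>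
    intro s u u' t h1 h2
    cases s with
    | var x => simp [subtermAt] at h1
    | app h ts =>
      simp only [subtermAt, replaceAt] at h1 h2
      cases hts : ts[i]? with
      | none => rw [hts] at h1; simp at h1
      | some ti =>
        rw [hts] at h1 h2
        simp only [] at h1 h2
        cases hrep : replaceAt p ti u' with
        | none => rw [hrep] at h2; simp at h2
        | some ti' =>
          rw [hrep] at h2
          simp only [Option.some.injEq] at h2
          subst h2
          obtain ⟨ihG, ihP⟩ := ih ti u u' ti' h1 hrep
          constructor
          · have hset := wGL_set ts i ti ti' hts
            simp only [wG, List.length_set]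
            omega
          · intro hk
            obtain ⟨hkey, ihP⟩ := ihP hk
            have hmap := map_key_set ts i ti ti' hts hkey
            have hset := wPL_set ts i ti ti' hts
            refine ⟨by simp [key, List.length_set], ?_⟩
            simp only [wP, hmap]
            omega

/-- redex shapes for R15. -/
def Red (v : Term F15 ℕ) : Prop :=
  (∃ a b, v = .app .g [a, b]) ∨ (∃ c, v = .app .f [.app .zero [], .app .one [], c])

mutual
  theorem findRedex : (x : Term F15 ℕ) → wG x + wP x ≠ 0 →
      ∃ q v, subtermAt q x = some v ∧ Red v
    | .var _, hne => by simp [wG, wP] at hne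
    | .app h ts, hne => by
      by_cases hg : gInd h ts.length = 0
      · by_cases hp : pInd h (ts.map key) = 0
        · have hlist : wGL ts + wPL ts ≠ 0 := by
            simp only [wG, wP] at hne; omega
          obtain ⟨i, t, q, v, hit, hq, hred⟩ := findRedexL ts hlist
          refine ⟨i :: q, v, ?_, hred⟩
          simp only [subtermAt]
          rw [hit]; exact hq
        · obtain ⟨rfl, k, hk⟩ := pInd_ne hp
          rcases ts with _ | ⟨a, _ | ⟨b, _ | ⟨c, _ | ⟨d, ts⟩⟩⟩⟩ <;> simp at hk
          obtain ⟨ha, hb, -⟩ := hk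
          exact ⟨[], _, rfl, Or.inr ⟨c, by rw [key_zero ha, key_one hb]⟩⟩
      · obtain ⟨rfl, hlen⟩ := gInd_ne hg
        obtain ⟨a, b, rfl⟩ := List.length_eq_two.mp hlen
        exact ⟨[], _, rfl, Or.inl ⟨a, b, rfl⟩⟩

  theorem findRedexL : (ts : List (Term F15 ℕ)) → wGL ts + wPL ts ≠ 0 →
      ∃ (i : ℕ) (t : Term F15 ℕ) (q : List ℕ) (v : Term F15 ℕ), ts[i]? = some t ∧ subtermAt q t = some v ∧ Red v
    | [], hne => by simp [wGL, wPL] at hne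
    | t :: ts, hne => by
      by_cases h : wG t + wP t = 0
      · have hlist : wGL ts + wPL ts ≠ 0 := by
          simp only [wGL, wPL] at hne; omega
        obtain ⟨i, t', q, v, h1, h2, h3⟩ := findRedexL ts hlist
        exact ⟨i + 1, t', q, v, by simpa using h1, h2, h3⟩
      · obtain ⟨q, v, hq, hred⟩ := findRedex t h
        exact ⟨0, t, q, v, by simp, hq, hred⟩
end

theorem replace_exists : ∀ (q : List ℕ) (s u : Term F15 ℕ), subtermAt q s = some u →
    ∀ w, ∃ t, replaceAt q s w = some t := by
  intro q
  induction q with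
  | nil => exact fun s u _ w => ⟨w, rfl⟩
  | cons i q ih =>
    intro s u hs w
    cases s with
    | var x => simp [subtermAt] at hs
    | app h ts =>
      simp only [subtermAt] at hs
      cases hts : ts[i]? with
      | none => rw [hts] at hs; simp at hs
      | some ti =>
        rw [hts] at hs; simp only [] at hs
        obtain ⟨ti', hti'⟩ := ih ti u hs w
        exact ⟨.app h (ts.set i ti'), by simp only [replaceAt, hts, hti']⟩

theorem subtermAt_append : ∀ (p q : List ℕ) (s : Term F15 ℕ),
    subtermAt (p ++ q) s = (subtermAt p s).bind (subtermAt q) := by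
  intro p
  induction p with
  | nil => intros; rfl
  | cons i p ih =>
    intro q s
    cases s with
    | var x => rfl
    | app h ts =>
      simp only [List.cons_append, subtermAt]
      cases hts : ts[i]? with
      | none => rfl
      | some ti => exact ih q ti

theorem red_reducibleAt {s v : Term F15 ℕ} {q : List ℕ}
    (hsub : subtermAt q s = some v) (hred : Red v) : ReducibleAt R15 s q := by
  rcases hred with ⟨a, b, rfl⟩ | ⟨c, rfl⟩
  · set τ : ℕ → Term F15 ℕ := fun n => if n = 0 then a else b with hτ
    obtain ⟨t, ht⟩ := replace_exists q s _ hsub (subst τ (.var 0))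
    refine ⟨t, ⟨.app .g [.var 0, .var 1], .var 0⟩, by simp [R15], τ, ?_, ht⟩
    rw [hsub]
    simp [subst, substList, hτ]
  · set τ : ℕ → Term F15 ℕ := fun _ => c with hτ
    obtain ⟨t, ht⟩ :=
      replace_exists q s _ hsub (subst τ (.app .f [.var 0, .var 0, .var 0]))
    refine ⟨t, ⟨.app .f [.app .zero [], .app .one [], .var 0],
      .app .f [.var 0, .var 0, .var 0]⟩, by simp [R15], τ, ?_, ht⟩
    rw [hsub]
    simp [subst, substList, hτ]

theorem step_decrease {s t : Term F15 ℕ} (h : InnStep R15 s t) :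
    Prod.Lex (· < · : ℕ → ℕ → Prop) (· < · : ℕ → ℕ → Prop)
      (wG t, wP t) (wG s, wP s) := by
  obtain ⟨p, ⟨ρ, hρ, τ, hsub, hrep⟩, hinn⟩ := h
  simp only [R15, List.mem_cons, List.not_mem_nil, or_false] at hρ
  rcases hρ with rfl | rfl | rfl
  · -- f-rule
    simp only [subst, substList] at hsub hrep
    set x := τ 0 with hx
    have hx0 : wG x = 0 ∧ wP x = 0 := by
      by_contra hc
      have hne : wG x + wP x ≠ 0 := by omega
      obtain ⟨q, v, hqv, hredv⟩ := findRedex x hne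
      have hsub2 : subtermAt (p ++ (2 :: q)) s = some v := by
        rw [subtermAt_append, hsub]
        show subtermAt (2 :: q) (.app .f [.app .zero [], .app .one [], x]) = some v
        simpa [subtermAt] using hqv
      refine hinn (p ++ 2 :: q) ⟨⟨2 :: q, rfl⟩, ?_⟩ (red_reducibleAt hsub2 hredv)
      intro he
      have := congrArg List.length he
      simp at this
    obtain ⟨hG0, hP0⟩ := hx0
    obtain ⟨hGeq, hPeq'⟩ := repl p s _ _ t hsub hrep
    obtain ⟨-, hPeq⟩ := hPeq' rfl
    simp only [wG, wGL, gInd] at hGeq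
    simp only [wP, wPL, List.map_cons, List.map_nil, key_app, List.length_nil,
      pInd_same, pInd_zero, pInd_one, pInd_pat] at hPeq
    have hGs : wG t = wG s := by omega
    rw [hGs]
    exact Prod.Lex.right _ (by omega)
  · -- g-rule, first projection
    simp only [subst, substList] at hsub hrep
    obtain ⟨hGeq, -⟩ := repl p s _ _ t hsub hrep
    have : wG (Term.app F15.g [τ 0, τ 1] : Term F15 ℕ) = 1 + (wG (τ 0) + (wG (τ 1) + 0)) := by
      simp [wG, wGL, gInd]
    exact Prod.Lex.left _ _ (by omega)
  · -- g-rule, second projection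
    simp only [subst, substList] at hsub hrep
    obtain ⟨hGeq, -⟩ := repl p s _ _ t hsub hrep
    have : wG (Term.app F15.g [τ 0, τ 1] : Term F15 ℕ) = 1 + (wG (τ 0) + (wG (τ 1) + 0)) := by
      simp [wG, wGL, gInd]
    exact Prod.Lex.left _ _ (by omega)

/-- every ground term of T(F) innermost terminates for Toyama's system. -/
theorem toyama_innermost_terminating :
    ∀ t : Term F15 ℕ, IsGround t → Term.WF arity15 t → InnTerminates R15 t := by
  intro t _ _
  rintro ⟨f, hf0, hfs⟩
  have wf : WellFounded (Prod.Lex (· < · : ℕ → ℕ → Prop) (· < · : ℕ → ℕ → Prop)) :=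
    WellFounded.prod_lex wellFounded_lt wellFounded_lt
  obtain ⟨m, ⟨k, hk⟩, hmin⟩ := wf.has_min (Set.range fun n => (wG (f n), wP (f n)))
    ⟨_, ⟨0, rfl⟩⟩
  exact hmin _ ⟨k + 1, rfl⟩ (hk ▸ step_decrease (hfs k))

end TRS
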